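/- arXiv:2603.15111 — 2 statements merged into one kernel-verified Lean document; each statement's English description precedes it below -/
import Mathlib

section
/- Let p ≤ n be positive integers, let G, M ∈ ℍ^{n×n} be Hermitian positive definite (so M is invertible), let X ∈ ℍ^{n×p} satisfy XᴴGX = I_p, let Y ∈ ℍ^{n×p} be arbitrary, and suppose S ∈ ℍ^{p×p} is Hermitian and satisfies her(XᴴG M⁻¹ G X S) = her(XᴴGY). Define Z := Y − M⁻¹GXS. Then: (i) ZᴴGX + XᴴGZ = 0, and (ii) re(tr(ξᴴM(Y − Z))) = 0 for every ξ ∈ ℍ^{n×p} with ξᴴGX + XᴴGξ = 0. That is, Z is the orthogonal projection of Y onto the tangent space at X with respect to the inner product ⟨ξ,η⟩ = re(tr(ξᴴMη)). -/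
open Matrix
open scoped Quaternion

lemma quat_re_mul_comm (a b : ℍ[ℝ]) : (a * b).re = (b * a).re := by
  simp [Quaternion.re_mul]; ring

lemma quat_re_sum {ι : Type*} (s : Finset ι) (f : ι → ℍ[ℝ]) :
    (∑ i ∈ s, f i).re = ∑ i ∈ s, (f i).re :=
  map_sum (AddMonoidHom.mk' (fun q : ℍ[ℝ] => q.re) (fun _ _ => rfl)) f s

lemma re_trace_mul_comm {p q : ℕ} (A : Matrix (Fin p) (Fin q) ℍ[ℝ])
    (B : Matrix (Fin q) (Fin p) ℍ[ℝ]) : ((A * B).trace).re = ((B * A).trace).re := by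
  simp only [Matrix.trace, Matrix.diag, Matrix.mul_apply, quat_re_sum, Quaternion.re_mul]
  rw [Finset.sum_comm]
  simp [mul_comm]

lemma re_trace_conjTranspose {p : ℕ} (A : Matrix (Fin p) (Fin p) ℍ[ℝ]) :
    (Aᴴ.trace).re = (A.trace).re := by
  simp [Matrix.trace, Matrix.diag, Matrix.conjTranspose_apply, quat_re_sum]

/-- Hermitian part of a square quaternionic matrix. -/
noncomputable def her {p : ℕ} (A : Matrix (Fin p) (Fin p) ℍ[ℝ]) : Matrix (Fin p) (Fin p) ℍ[ℝ] :=
  (2⁻¹ : ℝ) • (A + Aᴴ)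

/-- If the Hermitian `S` solves the Sylvester equation
`her(XᴴG M⁻¹ G X S) = her(XᴴGY)`, then `Z = Y − M⁻¹GXS` is the orthogonal projection
of `Y` onto the tangent space at `X`: `Z` is tangent and `Y − Z` is orthogonal to
every tangent vector with respect to `⟨ξ,η⟩ = re(tr(ξᴴMη))`. -/
theorem projection_generalized_quaternionic_stiefel (n p : ℕ) (hp : 0 < p) (hpn : p ≤ n)
    (G M : Matrix (Fin n) (Fin n) ℍ[ℝ]) (hG : Gᴴ = G) (hM : Mᴴ = M)
    (hGpd : ∀ x : Fin n → ℍ[ℝ], x ≠ 0 → 0 < (star x ⬝ᵥ G *ᵥ x).re)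
    (hMpd : ∀ x : Fin n → ℍ[ℝ], x ≠ 0 → 0 < (star x ⬝ᵥ M *ᵥ x).re)
    [Invertible M]
    (X : Matrix (Fin n) (Fin p) ℍ[ℝ]) (hX : Xᴴ * G * X = 1)
    (Y : Matrix (Fin n) (Fin p) ℍ[ℝ])
    (S : Matrix (Fin p) (Fin p) ℍ[ℝ]) (hSherm : Sᴴ = S)
    (hS : her (Xᴴ * G * ⅟M * G * X * S) = her (Xᴴ * G * Y))
    (Z : Matrix (Fin n) (Fin p) ℍ[ℝ]) (hZ : Z = Y - ⅟M * G * X * S) :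
    Zᴴ * G * X + Xᴴ * G * Z = 0 ∧
      ∀ ξ : Matrix (Fin n) (Fin p) ℍ[ℝ], ξᴴ * G * X + Xᴴ * G * ξ = 0 →
        ((ξᴴ * (M * (Y - Z))).trace).re = 0 := by
  have hMinv : (⅟M)ᴴ = ⅟M := by
    have h1 : M * (⅟M)ᴴ = 1 := by
      calc M * (⅟M)ᴴ = (⅟M * Mᴴ)ᴴ := by
            rw [Matrix.conjTranspose_mul, Matrix.conjTranspose_conjTranspose]
        _ = (⅟M * M)ᴴ := by rw [hM]
        _ = 1 := by rw [invOf_mul_self, Matrix.conjTranspose_one]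
    exact (invOf_eq_right_inv h1).symm
  have hCH : (Xᴴ * G * Y)ᴴ = Yᴴ * G * X := by
    simp only [Matrix.conjTranspose_mul, Matrix.conjTranspose_conjTranspose, hG,
      Matrix.mul_assoc]
  -- key consequence of hS
  have key : Xᴴ * G * ⅟M * G * X * S + S * (Xᴴ * G * ⅟M * G * X) =
      Xᴴ * G * Y + (Xᴴ * G * Y)ᴴ := by
    have h2 : (Xᴴ * G * ⅟M * G * X * S) + (Xᴴ * G * ⅟M * G * X * S)ᴴ =
        (Xᴴ * G * Y) + (Xᴴ * G * Y)ᴴ := by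
      have h' := hS
      unfold her at h'
      have h2ne : (2⁻¹ : ℝ) ≠ 0 := by norm_num
      exact smul_right_injective _ h2ne h'
    rw [← h2]
    congr 1
    simp only [Matrix.conjTranspose_mul, hSherm, hMinv, hG,
      Matrix.conjTranspose_conjTranspose, Matrix.mul_assoc]
  constructor
  · have expand : (Y - ⅟M * G * X * S)ᴴ * G * X + Xᴴ * G * (Y - ⅟M * G * X * S) =
        (Yᴴ * G * X + Xᴴ * G * Y) -
          (Xᴴ * G * ⅟M * G * X * S + S * (Xᴴ * G * ⅟M * G * X)) := by
      simp only [Matrix.conjTranspose_sub, Matrix.conjTranspose_mul, hSherm, hMinv, hG,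
        Matrix.conjTranspose_conjTranspose, Matrix.sub_mul, Matrix.mul_sub, Matrix.mul_assoc]
      abel
    rw [hZ, expand, key, hCH]
    abel
  · intro ξ hξ
    have hYZ : Y - Z = ⅟M * G * X * S := by rw [hZ, sub_sub_cancel]
    have hsimp : ξᴴ * (M * (Y - Z)) = (ξᴴ * G * X) * S := by
      rw [hYZ]
      simp only [← Matrix.mul_assoc]
      rw [show ξᴴ * M * ⅟M = ξᴴ * (M * ⅟M) from Matrix.mul_assoc _ _ _, mul_invOf_self,
        Matrix.mul_one]
    rw [hsimp]
    set A := ξᴴ * G * X with hA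
    have hAskew : Aᴴ = -A := by
      have hb : Xᴴ * G * ξ = -A := eq_neg_of_add_eq_zero_right hξ
      calc Aᴴ = Xᴴ * G * ξ := by
            simp only [hA, Matrix.conjTranspose_mul, Matrix.conjTranspose_conjTranspose, hG,
              Matrix.mul_assoc]
        _ = -A := hb
    have h1 : ((A * S).trace).re = (((A * S)ᴴ).trace).re :=
      (re_trace_conjTranspose (A * S)).symm
    have h2 : (A * S)ᴴ = -(S * A) := by
      rw [Matrix.conjTranspose_mul, hSherm, hAskew, Matrix.mul_neg]
    have h3 : ((-(S * A)).trace).re = -((A * S).trace).re := by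
      rw [Matrix.trace_neg, Quaternion.re_neg, re_trace_mul_comm]
    rw [h2, h3] at h1
    linarith
end

section
/- Let n, p be positive integers, let A ∈ ℍ^{n×n} be Hermitian, and let N ∈ ℍ^{p×p} be a diagonal matrix with real diagonal entries. Then for all X, Y ∈ ℍ^{n×p}, the real-valued function of a real variable t ↦ re(tr((X + tY)ᴴ A (X + tY) N)) is differentiable at t = 0 with derivative re(tr((2AXN)ᴴ Y)). In other words, the Euclidean gradient of the function X ↦ re(tr(XᴴAXN)) on ℍ^{n×p} is 2AXN. -/
open Matrix
open scoped Quaternion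

private lemma re_sum {α : Type*} (s : Finset α) (f : α → ℍ[ℝ]) :
    (∑ i ∈ s, f i).re = ∑ i ∈ s, (f i).re :=
  map_sum (QuaternionAlgebra.reₗ (-1 : ℝ) (0 : ℝ) (-1 : ℝ)) f s

private lemma re_tr_mul_comm {k l : ℕ} (P : Matrix (Fin k) (Fin l) ℍ[ℝ])
    (Q : Matrix (Fin l) (Fin k) ℍ[ℝ]) :
    ((P * Q).trace).re = ((Q * P).trace).re := by
  simp only [Matrix.trace, Matrix.diag, Matrix.mul_apply, re_sum]
  rw [Finset.sum_comm]
  congr 1; ext j; congr 1; ext i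
  simp [Quaternion.re_mul]; ring

private lemma conjT_real_smul {k l : ℕ} (t : ℝ) (M : Matrix (Fin k) (Fin l) ℍ[ℝ]) :
    (t • M)ᴴ = t • Mᴴ := by
  refine Matrix.ext fun i j => ?_
  rw [Matrix.conjTranspose_apply, Matrix.smul_apply, Matrix.smul_apply,
    Matrix.conjTranspose_apply, Quaternion.star_smul]

private lemma re_tr_conjT {k : ℕ} (M : Matrix (Fin k) (Fin k) ℍ[ℝ]) :
    ((Mᴴ).trace).re = (M.trace).re := by
  simp [Matrix.trace, Matrix.diag, re_sum, Matrix.conjTranspose_apply]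

/-- For Hermitian `A ∈ ℍ^{n×n}` and a real diagonal `N ∈ ℍ^{p×p}`, the function
`t ↦ re(tr((X+tY)ᴴ A (X+tY) N))` has derivative `re(tr((2AXN)ᴴ Y))` at `t = 0`;
i.e. the Euclidean gradient of `X ↦ re(tr(XᴴAXN))` is `2AXN`. -/
theorem euclidean_gradient_re_trace_XHAXN (n p : ℕ) (hn : 0 < n) (hp : 0 < p)
    (A : Matrix (Fin n) (Fin n) ℍ[ℝ]) (hA : Aᴴ = A)
    (μ : Fin p → ℝ) (N : Matrix (Fin p) (Fin p) ℍ[ℝ])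
    (hN : N = Matrix.diagonal fun r => ((μ r : ℝ) : ℍ[ℝ]))
    (X Y : Matrix (Fin n) (Fin p) ℍ[ℝ]) :
    HasDerivAt (fun t : ℝ => (((X + t • Y)ᴴ * A * (X + t • Y) * N).trace).re)
      (((((2 : ℝ) • (A * X * N))ᴴ * Y).trace).re) 0 := by
  have hNH : Nᴴ = N := by subst hN; simp
  set a := (((Xᴴ * A * X * N).trace).re) with ha
  set b := (((Xᴴ * A * Y * N).trace).re + ((Yᴴ * A * X * N).trace).re) with hb
  set c := (((Yᴴ * A * Y * N).trace).re) with hc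
  have expand : ∀ t : ℝ,
      (((X + t • Y)ᴴ * A * (X + t • Y) * N).trace).re = a + t * b + t * t * c := by
    intro t
    have h1 : (X + t • Y)ᴴ * A * (X + t • Y) * N
        = Xᴴ * A * X * N + t • (Xᴴ * A * Y * N + Yᴴ * A * X * N)
          + (t * t) • (Yᴴ * A * Y * N) := by
      rw [Matrix.conjTranspose_add, conjT_real_smul]
      simp only [Matrix.add_mul, Matrix.mul_add, Matrix.smul_mul, Matrix.mul_smul,
        smul_smul, smul_add]
      abel
    rw [h1]
    simp only [Matrix.trace_add, Matrix.trace_smul, Quaternion.re_add, Quaternion.re_smul,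
      smul_eq_mul, ha, hb, hc]
  have hfun : (fun t : ℝ => (((X + t • Y)ᴴ * A * (X + t • Y) * N).trace).re)
      = fun t : ℝ => a + t * b + t * t * c := funext expand
  rw [hfun]
  have hd : HasDerivAt (fun t : ℝ => a + t * b + t * t * c) b 0 := by
    have : HasDerivAt (fun t : ℝ => a + t * b + t * t * c)
        (0 + 1 * b + (1 * 0 + 0 * 1) * c) 0 := by
      exact ((hasDerivAt_const 0 a).add ((hasDerivAt_id 0).mul_const b)).add
        (((hasDerivAt_id 0).mul (hasDerivAt_id 0)).mul_const c)
    simpa using this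
  -- now show b equals the claimed derivative
  have key : ∀ Z : Matrix (Fin n) (Fin p) ℍ[ℝ],
      (((A * X * N)ᴴ * Z).trace).re = ((Xᴴ * A * Z * N).trace).re := by
    intro Z
    have : (A * X * N)ᴴ * Z = N * (Xᴴ * A * Z) := by
      simp [Matrix.conjTranspose_mul, hA, hNH, Matrix.mul_assoc]
    rw [this, re_tr_mul_comm]
  have h2 : ((Yᴴ * A * X * N).trace).re = ((Xᴴ * A * Y * N).trace).re := by
    rw [← re_tr_conjT (Yᴴ * A * X * N)]
    have : (Yᴴ * A * X * N)ᴴ = N * (Xᴴ * A * Y) := by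
      simp [Matrix.conjTranspose_mul, hA, hNH, Matrix.mul_assoc]
    rw [this, re_tr_mul_comm]
  have h3 : (((((2 : ℝ) • (A * X * N))ᴴ * Y).trace).re) = b := by
    have : ((2 : ℝ) • (A * X * N))ᴴ * Y = (2 : ℝ) • ((A * X * N)ᴴ * Y) := by
      rw [conjT_real_smul, Matrix.smul_mul]
    rw [this, Matrix.trace_smul, Quaternion.re_smul, key Y, hb, h2, smul_eq_mul, two_mul]
  rw [h3]; exact hd
end
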